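/- Let (s_n)_{n≥1} ⊆ (0,1) satisfy s_2 < 1 - s_1/(1 - s_1) and s_n ≤ s_{n-2}/2 - 2·s_{n-1} for all n ≥ 3, and define c_n := 1 - s_n for n odd and c_n := s_n for n even, with a_n := 1 - c_n. Then for every N ≥ 2 and every n with 1 ≤ n ≤ N-1, writing A := c_{2N+1}·a_{2N}, one has (1 - A·a_{2n+2})·c_{2n+1}·a_{2n} < A·a_{2n}·(A - A²·a_{2n+2} - c_{2n+2}·a_{2n+1}). -/
import Mathlib


set_option maxHeartbeats 1000000 in
theorem stmt15 (s c a : ℕ → ℝ)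
    (hs : ∀ n, 1 ≤ n → s n ∈ Set.Ioo (0 : ℝ) 1)
    (h1 : s 2 < 1 - s 1 / (1 - s 1))
    (h2 : ∀ n, 3 ≤ n → s n ≤ s (n - 2) / 2 - 2 * s (n - 1))
    (hcodd : ∀ n, 1 ≤ n → Odd n → c n = 1 - s n)
    (hceven : ∀ n, 1 ≤ n → Even n → c n = s n)
    (ha : ∀ n, a n = 1 - c n) :
    ∀ N n : ℕ, 2 ≤ N → 1 ≤ n → n ≤ N - 1 →
      (1 - c (2 * N + 1) * a (2 * N) * a (2 * n + 2)) * (c (2 * n + 1) * a (2 * n)) <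
        c (2 * N + 1) * a (2 * N) * a (2 * n) *
          (c (2 * N + 1) * a (2 * N) - (c (2 * N + 1) * a (2 * N)) ^ 2 * a (2 * n + 2)
            - c (2 * n + 2) * a (2 * n + 1)) := by
  intro N n hN hn hnN
  -- s is rapidly decreasing
  have hdec : ∀ k, 1 ≤ k → s (k + 1) < s k / 4 := by
    intro k hk
    have h := h2 (k + 2) (by omega)
    have e1 : k + 2 - 2 = k := by omega
    have e2 : k + 2 - 1 = k + 1 := by omega
    rw [e1, e2] at h
    have hp := (hs (k + 2) (by omega)).1
    linarith
  have hmono : ∀ j k, 1 ≤ j → j ≤ k → s k ≤ s j := by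
    intro j k hj hjk
    induction k with
    | zero => omega
    | succ k ih =>
      rcases Nat.lt_or_ge k.succ j with h | h
      · omega
      · rcases Nat.eq_or_lt_of_le h with h' | h'
        · rw [h']
        · have hk1 : 1 ≤ k := by omega
          have hd := hdec k hk1
          have hik := ih (by omega)
          have hp := (hs k hk1).1
          have : s (k + 1) < s k := by linarith
          exact le_trans (le_of_lt this) hik
  -- rewrite c and a in terms of s
  have e1 : c (2 * N + 1) = 1 - s (2 * N + 1) := hcodd _ (by omega) ⟨N, rfl⟩
  have e2 : a (2 * N) = 1 - s (2 * N) := by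
    rw [ha, hceven _ (by omega) ⟨N, two_mul N⟩]
  have e3 : a (2 * n + 2) = 1 - s (2 * n + 2) := by
    rw [ha, hceven _ (by omega) ⟨n + 1, by ring⟩]
  have e4 : c (2 * n + 1) = 1 - s (2 * n + 1) := hcodd _ (by omega) ⟨n, rfl⟩
  have e5 : a (2 * n) = 1 - s (2 * n) := by
    rw [ha, hceven _ (by omega) ⟨n, two_mul n⟩]
  have e6 : c (2 * n + 2) = s (2 * n + 2) := hceven _ (by omega) ⟨n + 1, by ring⟩
  have e7 : a (2 * n + 1) = s (2 * n + 1) := by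
    rw [ha, hcodd _ (by omega) ⟨n, rfl⟩]; ring
  rw [e1, e2, e3, e4, e5, e6, e7]
  set t := s (2 * N + 1) with ht
  set u := s (2 * N) with hu
  set p := s (2 * n) with hp
  set q := s (2 * n + 1) with hq
  set r := s (2 * n + 2) with hr
  set w := s (2 * n + 3) with hw
  obtain ⟨ht0, ht1⟩ := hs (2 * N + 1) (by omega)
  obtain ⟨hu0, hu1⟩ := hs (2 * N) (by omega)
  obtain ⟨hp0, hp1⟩ := hs (2 * n) (by omega)
  obtain ⟨hq0, hq1⟩ := hs (2 * n + 1) (by omega)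
  obtain ⟨hr0, hr1⟩ := hs (2 * n + 2) (by omega)
  obtain ⟨hw0, hw1⟩ := hs (2 * n + 3) (by omega)
  have htw : t ≤ w := hmono (2 * n + 3) (2 * N + 1) (by omega) (by omega)
  have hur : u ≤ r := hmono (2 * n + 2) (2 * N) (by omega) (by omega)
  have hwq : w ≤ q / 2 - 2 * r := by
    have h := h2 (2 * n + 3) (by omega)
    have a1 : 2 * n + 3 - 2 = 2 * n + 1 := by omega
    have a2 : 2 * n + 3 - 1 = 2 * n + 2 := by omega
    rw [a1, a2] at h
    exact h
  -- abbreviations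
  have hA0 : 0 < (1 - t) * (1 - u) := mul_pos (by linarith) (by linarith)
  have hA1 : (1 - t) * (1 - u) < 1 := by nlinarith [mul_pos ht0 hu0]
  have hB0 : 0 < 1 - (1 - t) * (1 - u) * (1 - r) := by nlinarith [mul_pos hA0 hr0]
  have hBlt : 1 - (1 - t) * (1 - u) * (1 - r) < w + 2 * r := by
    nlinarith [mul_pos ht0 hu0, mul_pos (sub_pos.mpr hA1) hr0]
  have key : (1 - (1 - t) * (1 - u) * (1 - r)) * (1 + (1 - t) * (1 - u)) < q := by
    have h2B : (1 - (1 - t) * (1 - u) * (1 - r)) * (1 + (1 - t) * (1 - u))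
        ≤ 2 * (1 - (1 - t) * (1 - u) * (1 - r)) := by
      nlinarith [mul_pos hB0 (sub_pos.mpr hA1)]
    linarith
  have hfac : (1 - t) * (1 - u) * (1 - p) *
        ((1 - t) * (1 - u) - ((1 - t) * (1 - u)) ^ 2 * (1 - r) - r * q)
      - (1 - (1 - t) * (1 - u) * (1 - r)) * ((1 - q) * (1 - p))
      = (1 - p) * (1 - (1 - t) * (1 - u)) *
        (q - (1 - (1 - t) * (1 - u) * (1 - r)) * (1 + (1 - t) * (1 - u))) := by
    ring
  have hpos : 0 < (1 - p) * (1 - (1 - t) * (1 - u)) *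
        (q - (1 - (1 - t) * (1 - u) * (1 - r)) * (1 + (1 - t) * (1 - u))) :=
    mul_pos (mul_pos (by linarith) (by linarith)) (by linarith)
  linarith
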